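/- Let δ > 0 and set f_ν(z) = z/2 + δ·(−1)^ν on the unit disk (with δ < 1/2). Then the sequence L_ν(0) = δ·(−1)^ν·Σ_{j=0}^{ν}(−1/2)^j does not converge; in particular the left iterated function system {L_ν} does not converge pointwise. -/

import Mathlib

open Filter Topology Complex Finset

/-- Left iterated function system: `LFS f ν = f ν ∘ f (ν-1) ∘ ⋯ ∘ f 0`. -/
def LFS (f : ℕ → ℂ → ℂ) : ℕ → ℂ → ℂ
  | 0 => f 0
  | n + 1 => f (n + 1) ∘ LFS f n

/-- For `f_ν(z) = z/2 + δ(−1)^ν` with `0 < δ < 1/2`, one has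
`L_ν(0) = δ(−1)^ν ∑_{j=0}^{ν} (−1/2)^j`, and the sequence `L_ν(0)` does not converge;
in particular the left iterated function system does not converge pointwise. -/
theorem stmt11 (δ : ℝ) (hδ0 : 0 < δ) (hδ : δ < 1 / 2)
    (f : ℕ → ℂ → ℂ) (hf : ∀ ν z, f ν z = z / 2 + (δ : ℂ) * (-1 : ℂ) ^ ν) :
    (∀ ν, LFS f ν 0 =
        (δ : ℂ) * (-1 : ℂ) ^ ν * ∑ j ∈ Finset.range (ν + 1), (-(1 / 2) : ℂ) ^ j) ∧
      ¬ ∃ c : ℂ, Tendsto (fun ν => LFS f ν 0) atTop (𝓝 c) := by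
  have key : ∀ ν, LFS f ν 0 =
      (δ : ℂ) * (-1 : ℂ) ^ ν * ∑ j ∈ Finset.range (ν + 1), (-(1 / 2) : ℂ) ^ j := by
    intro ν
    induction ν with
    | zero => simp [LFS, hf]
    | succ n ih =>
      show f (n + 1) (LFS f n 0) = _
      rw [hf, ih, geom_sum_succ (x := (-(1/2) : ℂ)) (n := n + 1)]
      ring
  refine ⟨key, ?_⟩
  rintro ⟨c, hc⟩
  -- the geometric series sum
  have hr : ‖(-(1/2) : ℂ)‖ < 1 := by
    rw [norm_neg]
    simp only [norm_div, norm_one, Complex.norm_two]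
    norm_num
  have hsum : Tendsto (fun N => ∑ j ∈ Finset.range N, (-(1/2) : ℂ) ^ j) atTop
      (𝓝 ((1 - (-(1/2) : ℂ)))⁻¹) :=
    (hasSum_geometric_of_norm_lt_one hr).tendsto_sum_nat
  have heven : Tendsto (fun n => LFS f (2 * n) 0) atTop (𝓝 ((δ : ℂ) * (1 - (-(1/2) : ℂ))⁻¹)) := by
    have h2 : Tendsto (fun n : ℕ => 2 * n + 1) atTop atTop :=
      tendsto_atTop_atTop_of_monotone (fun a b h => by omega) (fun b => ⟨b, by omega⟩)
    have := (hsum.comp h2).const_mul (δ : ℂ)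
    refine this.congr fun n => ?_
    rw [key (2 * n)]
    simp [pow_mul]
  have hodd : Tendsto (fun n => LFS f (2 * n + 1) 0)
      atTop (𝓝 (-((δ : ℂ) * (1 - (-(1/2) : ℂ))⁻¹))) := by
    have h2 : Tendsto (fun n : ℕ => 2 * n + 1 + 1) atTop atTop :=
      tendsto_atTop_atTop_of_monotone (fun a b h => by omega) (fun b => ⟨b, by omega⟩)
    have := ((hsum.comp h2).const_mul (δ : ℂ)).neg
    refine this.congr fun n => ?_
    rw [key (2 * n + 1)]
    simp [pow_succ, pow_mul]
  have hme : Tendsto (fun n : ℕ => 2 * n) atTop atTop :=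
    tendsto_atTop_atTop_of_monotone (fun a b h => by omega) (fun b => ⟨b, by omega⟩)
  have hmo : Tendsto (fun n : ℕ => 2 * n + 1) atTop atTop :=
    tendsto_atTop_atTop_of_monotone (fun a b h => by omega) (fun b => ⟨b, by omega⟩)
  have he : Tendsto (fun n => LFS f (2 * n) 0) atTop (𝓝 c) := hc.comp hme
  have ho : Tendsto (fun n => LFS f (2 * n + 1) 0) atTop (𝓝 c) := hc.comp hmo
  have e1 : c = (δ : ℂ) * (1 - (-(1/2) : ℂ))⁻¹ := tendsto_nhds_unique he heven
  have e2 : c = -((δ : ℂ) * (1 - (-(1/2) : ℂ))⁻¹) := tendsto_nhds_unique ho hodd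
  rw [e1] at e2
  field_simp at e2
  have : δ = -δ := by exact_mod_cast e2
  linarith
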